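/- Let X be a nonempty set, let L be a subset of the closed unit ball of ℓ∞(X), and let (μ_j)_{j≥1} be a sequence of finitely supported probability measures on X. Assume there is a function μ : L → ℝ such that μ_j(f) → μ(f) as j → ∞ for every f ∈ L (where μ_j(f) = ∫_X f dμ_j). Then there exists a sequence (x_n)_{n≥1} of points of ⋃_{j=1}^∞ supp μ_j such that for every f ∈ L, (1/N)·Σ_{k=1}^N f(x_k) → μ(f) as N → ∞. -/

import Mathlib

open Filter Finset

section AuxSeq
variable {X : Type*}

/-- Sum of `f` over list entries via indexing with `getD`. -/
lemma aux_sum_range_getD (l : List X) (d : X) (f : X → ℝ) :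
    ∑ i ∈ Finset.range l.length, f (l.getD i d) = (l.map f).sum := by
  induction l with
  | nil => simp
  | cons a l ih =>
    rw [List.length_cons, Finset.sum_range_succ']
    simp only [List.getD_cons_succ, List.getD_cons_zero, List.map_cons, List.sum_cons, ih]
    ring

lemma aux_sum_mod (g : ℕ → ℝ) (p : ℕ) (hp : 0 < p) (m : ℕ) :
    ∑ i ∈ Finset.range m, g (i % p)
      = (m / p : ℕ) • (∑ i ∈ Finset.range p, g i) + ∑ i ∈ Finset.range (m % p), g i := by
  have key : ∀ q r, r < p → ∑ i ∈ Finset.range (q * p + r), g (i % p)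
      = q • (∑ i ∈ Finset.range p, g i) + ∑ i ∈ Finset.range r, g i := by
    intro q
    induction q with
    | zero =>
      intro r hr
      simp only [Nat.zero_mul, Nat.zero_add, zero_smul, zero_add]
      refine Finset.sum_congr rfl fun i hi => ?_
      rw [Nat.mod_eq_of_lt (lt_trans (Finset.mem_range.mp hi) hr)]
    | succ q ih =>
      intro r hr
      have h1 : (q + 1) * p + r = p + (q * p + r) := by ring
      rw [h1, Finset.sum_range_add]
      have h2 : ∀ i, g ((p + i) % p) = g (i % p) := fun i => by rw [Nat.add_mod_left]
      simp only [h2]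
      rw [ih r hr]
      have h3 : ∑ i ∈ Finset.range p, g (i % p) = ∑ i ∈ Finset.range p, g i := by
        refine Finset.sum_congr rfl fun i hi => ?_
        rw [Nat.mod_eq_of_lt (Finset.mem_range.mp hi)]
      rw [h3, succ_nsmul]
      ring
  have := key (m / p) (m % p) (Nat.mod_lt _ hp)
  rwa [Nat.div_add_mod'] at this

/-- List with each `x` in `s` repeated `c x` times. -/
noncomputable def repList (s : Finset X) (c : X → ℕ) : List X :=
  s.toList.flatMap fun x => List.replicate (c x) x

lemma repList_length (s : Finset X) (c : X → ℕ) :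
    (repList s c).length = ∑ x ∈ s, c x := by
  rw [repList, List.length_flatMap, ← Finset.sum_map_toList]
  simp

lemma repList_map_sum (s : Finset X) (c : X → ℕ) (f : X → ℝ) :
    ((repList s c).map f).sum = ∑ x ∈ s, (c x : ℝ) * f x := by
  rw [repList, ← Finset.sum_map_toList]
  induction s.toList with
  | nil => simp
  | cons a l ih =>
    simp only [List.flatMap_cons, List.map_append, List.sum_append, List.map_cons, List.sum_cons,
      List.map_replicate, List.sum_replicate, ih, nsmul_eq_mul]

lemma mem_repList {s : Finset X} {c : X → ℕ} {y : X} (hy : y ∈ repList s c) : y ∈ s := by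
  rw [repList, List.mem_flatMap] at hy
  obtain ⟨x, hx, hy⟩ := hy
  rw [List.eq_of_mem_replicate hy]
  exact Finset.mem_toList.mp hx

/-- Cumulative block lengths. -/
def Tcum (p : ℕ → ℕ) : ℕ → ℕ
  | 0 => 0
  | j + 1 => Tcum p j + (j + 1) * (Tcum p j + p j + p (j + 1) + 1) * p j

lemma Tcum_strictMono {p : ℕ → ℕ} (hp : ∀ j, 0 < p j) : StrictMono (Tcum p) := by
  apply strictMono_nat_of_lt_succ
  intro j
  have h1 := hp j
  have h2 : 1 ≤ (j + 1) * (Tcum p j + p j + p (j + 1) + 1) * p j :=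
    Nat.one_le_iff_ne_zero.mpr (by positivity)
  simp only [Tcum]
  omega

end AuxSeq

theorem stmt1 {X : Type*} [Nonempty X] (L : Set (X → ℝ))
    (hL : ∀ f ∈ L, ∀ x, |f x| ≤ 1)
    (s : ℕ → Finset X) (w : ℕ → X → ℝ)
    (hw : ∀ j, ∀ x ∈ s j, 0 < w j x)
    (hwsum : ∀ j, ∑ x ∈ s j, w j x = 1)
    (μ : (X → ℝ) → ℝ)
    (hconv : ∀ f ∈ L,
      Tendsto (fun j => ∑ x ∈ s j, w j x * f x) atTop (nhds (μ f))) :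
    ∃ seq : ℕ → X, (∀ n, ∃ j, seq n ∈ s j) ∧
      ∀ f ∈ L,
        Tendsto (fun N : ℕ => (N : ℝ)⁻¹ * ∑ k ∈ Finset.range N, f (seq k))
          atTop (nhds (μ f)) := by
  classical
  obtain ⟨d⟩ := ‹Nonempty X›
  -- supports are nonempty
  have hsne : ∀ j, (s j).Nonempty := by
    intro j
    rcases Finset.eq_empty_or_nonempty (s j) with h | h
    · exfalso
      have := hwsum j
      rw [h] at this
      simp at this
    · exact h
  have hcard1 : ∀ j, 1 ≤ (s j).card := fun j => Finset.card_pos.mpr (hsne j)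
  -- counts and patterns
  set n : ℕ → ℕ := fun j => (j + 1) * (s j).card with hn
  set c : ℕ → X → ℕ := fun j x => ⌈(n j : ℝ) * w j x⌉₊ with hc
  set pat : ℕ → List X := fun j => repList (s j) (c j) with hpatdef
  set p : ℕ → ℕ := fun j => (pat j).length with hpdef
  have hplen : ∀ j, p j = ∑ x ∈ s j, c j x := fun j => repList_length _ _
  have hnpos : ∀ j, 0 < n j := fun j => Nat.mul_pos (Nat.succ_pos j) (hcard1 j)
  have hc1 : ∀ j, ∀ x ∈ s j, 1 ≤ c j x := by
    intro j x hx
    have h0 : (0:ℝ) < (n j : ℝ) * w j x :=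
      mul_pos (by exact_mod_cast hnpos j) (hw j x hx)
    exact Nat.ceil_pos.mpr h0
  have hppos : ∀ j, 0 < p j := by
    intro j
    rw [hplen j]
    exact Finset.sum_pos (fun x hx => hc1 j x hx) (hsne j)
  have hwnn : ∀ j, ∀ x ∈ s j, (0:ℝ) ≤ w j x := fun j x hx => (hw j x hx).le
  have hclb : ∀ j, ∀ x ∈ s j, (n j : ℝ) * w j x ≤ c j x := fun j x _ => Nat.le_ceil _
  have hcub : ∀ j, ∀ x ∈ s j, (c j x : ℝ) ≤ (n j : ℝ) * w j x + 1 := by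
    intro j x hx
    exact (Nat.ceil_lt_add_one (mul_nonneg (Nat.cast_nonneg _) (hwnn j x hx))).le
  have hpreal : ∀ j, (p j : ℝ) = ∑ x ∈ s j, (c j x : ℝ) := by
    intro j
    rw [hplen j]
    push_cast
    rfl
  have hnp : ∀ j, (n j : ℝ) ≤ (p j : ℝ) := by
    intro j
    rw [hpreal j]
    calc (n j : ℝ) = ∑ x ∈ s j, (n j : ℝ) * w j x := by
          rw [← Finset.mul_sum, hwsum j, mul_one]
    _ ≤ ∑ x ∈ s j, (c j x : ℝ) := Finset.sum_le_sum (hclb j)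
  have hpn : ∀ j, (p j : ℝ) ≤ (n j : ℝ) + (s j).card := by
    intro j
    rw [hpreal j]
    calc ∑ x ∈ s j, (c j x : ℝ) ≤ ∑ x ∈ s j, ((n j : ℝ) * w j x + 1) :=
          Finset.sum_le_sum (hcub j)
    _ = (n j : ℝ) + (s j).card := by
          rw [Finset.sum_add_distrib, ← Finset.mul_sum, hwsum j]
          simp
  have hnpnat : ∀ j, n j ≤ p j := fun j => by exact_mod_cast hnp j
  -- cumulative sums
  set T : ℕ → ℕ := Tcum p with hTdef
  have hTmono : StrictMono T := Tcum_strictMono hppos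
  have hT0 : T 0 = 0 := rfl
  have hTsucc : ∀ j, T (j + 1) = T j + (j + 1) * (T j + p j + p (j + 1) + 1) * p j :=
    fun j => rfl
  have hTge : ∀ k, k ≤ T k := fun k => hTmono.le_apply
  -- block index
  have hex : ∀ N : ℕ, ∃ j, T j ≤ N ∧ N < T (j + 1) := by
    intro N
    have h : ∃ j, N < T (j + 1) := ⟨N, by have := hTge (N + 1); omega⟩
    refine ⟨Nat.find h, ?_, Nat.find_spec h⟩
    rcases Nat.eq_zero_or_pos (Nat.find h) with h0 | h0
    · rw [h0, hT0]
      exact Nat.zero_le N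
    · have hmin := Nat.find_min h (show Nat.find h - 1 < Nat.find h by omega)
      have heq : Nat.find h - 1 + 1 = Nat.find h := by omega
      rw [heq] at hmin
      omega
  choose J hJ1 hJ2 using hex
  have hJeq : ∀ j N, T j ≤ N → N < T (j + 1) → J N = j := by
    intro j N h1 h2
    by_contra hne
    rcases lt_or_gt_of_ne hne with hlt | hgt
    · have h3 : T (J N + 1) ≤ T j := hTmono.monotone (by omega)
      have h4 := hJ2 N
      omega
    · have h3 : T (j + 1) ≤ T (J N) := hTmono.monotone (by omega)
      have h4 := hJ1 N
      omega
  set seq : ℕ → X := fun N => (pat (J N)).getD ((N - T (J N)) % p (J N)) d with hseqdef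
  have hseq : ∀ j i, i < T (j + 1) - T j → seq (T j + i) = (pat j).getD (i % p j) d := by
    intro j i hi
    have hJ : J (T j + i) = j := hJeq j _ (Nat.le_add_right _ _) (by omega)
    simp only [hseqdef, hJ, Nat.add_sub_cancel_left]
  refine ⟨seq, ?_, ?_⟩
  · intro N
    refine ⟨J N, ?_⟩
    have hlt : (N - T (J N)) % p (J N) < (pat (J N)).length := Nat.mod_lt _ (hppos (J N))
    have hmem : (pat (J N)).getD ((N - T (J N)) % p (J N)) d ∈ pat (J N) := by
      rw [List.getD_eq_getElem _ _ hlt]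
      exact List.getElem_mem _
    exact mem_repList hmem
  · intro f hf
    have hf1 : ∀ x, |f x| ≤ 1 := hL f hf
    have hmf : |μ f| ≤ 1 := by
      have h1 : ∀ j : ℕ, |∑ x ∈ s j, w j x * f x| ≤ 1 := by
        intro j
        calc |∑ x ∈ s j, w j x * f x| ≤ ∑ x ∈ s j, |w j x * f x| :=
              Finset.abs_sum_le_sum_abs _ _
        _ ≤ ∑ x ∈ s j, w j x := by
              refine Finset.sum_le_sum fun x hx => ?_
              rw [abs_mul, abs_of_nonneg (hwnn j x hx)]
              calc w j x * |f x| ≤ w j x * 1 :=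
                    mul_le_mul_of_nonneg_left (hf1 x) (hwnn j x hx)
              _ = w j x := mul_one _
        _ = 1 := hwsum j
      exact le_of_tendsto ((hconv f hf).abs) (Eventually.of_forall h1)
    set η : ℕ → ℝ := fun j => |(∑ x ∈ s j, w j x * f x) - μ f| with hηdef
    have hη0 : ∀ j, 0 ≤ η j := fun j => abs_nonneg _
    have hηtend : Tendsto η atTop (nhds 0) := by
      have h1 := ((hconv f hf).sub_const (μ f)).abs
      simpa using h1
    -- pattern sum estimate
    have E1 : ∀ j, |((pat j).map f).sum - (p j : ℝ) * μ f|
        ≤ 2 * (s j).card + (p j : ℝ) * η j := by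
      intro j
      have hsum : ((pat j).map f).sum = ∑ x ∈ s j, (c j x : ℝ) * f x :=
        repList_map_sum _ _ _
      have hxbd : ∀ x ∈ s j, |(c j x : ℝ) - (p j : ℝ) * w j x|
          ≤ 1 + ((p j : ℝ) - n j) * w j x := by
        intro x hx
        have h1 := hclb j x hx
        have h2 := hcub j x hx
        have h3 := hwnn j x hx
        have h4 := hnp j
        rw [abs_le]
        constructor
        · nlinarith
        · nlinarith
      have key : |(∑ x ∈ s j, (c j x : ℝ) * f x) - (p j : ℝ) * ∑ x ∈ s j, w j x * f x|
          ≤ 2 * (s j).card := by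
        have heq : (∑ x ∈ s j, (c j x : ℝ) * f x) - (p j : ℝ) * ∑ x ∈ s j, w j x * f x
            = ∑ x ∈ s j, ((c j x : ℝ) - (p j : ℝ) * w j x) * f x := by
          rw [Finset.mul_sum, ← Finset.sum_sub_distrib]
          refine Finset.sum_congr rfl fun x hx => by ring
        rw [heq]
        calc |∑ x ∈ s j, ((c j x : ℝ) - (p j : ℝ) * w j x) * f x|
            ≤ ∑ x ∈ s j, |((c j x : ℝ) - (p j : ℝ) * w j x) * f x| :=
              Finset.abs_sum_le_sum_abs _ _
        _ ≤ ∑ x ∈ s j, (1 + ((p j : ℝ) - n j) * w j x) := by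
              refine Finset.sum_le_sum fun x hx => ?_
              rw [abs_mul]
              calc |(c j x : ℝ) - (p j : ℝ) * w j x| * |f x|
                  ≤ |(c j x : ℝ) - (p j : ℝ) * w j x| * 1 :=
                    mul_le_mul_of_nonneg_left (hf1 x) (abs_nonneg _)
              _ = |(c j x : ℝ) - (p j : ℝ) * w j x| := mul_one _
              _ ≤ 1 + ((p j : ℝ) - n j) * w j x := hxbd x hx
        _ = (s j).card + ((p j : ℝ) - n j) := by
              rw [Finset.sum_add_distrib, ← Finset.mul_sum, hwsum j]
              simp
        _ ≤ 2 * (s j).card := by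
              have := hpn j
              have : (p j : ℝ) - n j ≤ (s j).card := by linarith
              linarith
      calc |((pat j).map f).sum - (p j : ℝ) * μ f|
          = |((∑ x ∈ s j, (c j x : ℝ) * f x) - (p j : ℝ) * ∑ x ∈ s j, w j x * f x)
              + (p j : ℝ) * ((∑ x ∈ s j, w j x * f x) - μ f)| := by
            rw [hsum]; ring_nf
      _ ≤ |(∑ x ∈ s j, (c j x : ℝ) * f x) - (p j : ℝ) * ∑ x ∈ s j, w j x * f x|
            + |(p j : ℝ) * ((∑ x ∈ s j, w j x * f x) - μ f)| := abs_add_le _ _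
      _ ≤ 2 * (s j).card + (p j : ℝ) * η j := by
            rw [abs_mul, abs_of_nonneg (by positivity : (0:ℝ) ≤ (p j : ℝ))]
            exact add_le_add key le_rfl
    set δ : ℕ → ℝ := fun j => 2 / ((j : ℝ) + 1) + η j with hδdef
    have hδ0 : ∀ j, 0 ≤ δ j := fun j => add_nonneg (by positivity) (hη0 j)
    -- block partial-sum estimate
    have hblock : ∀ j m, m ≤ (j + 1) * (T j + p j + p (j + 1) + 1) * p j →
        |(∑ i ∈ Finset.range m, f (seq (T j + i))) - (m : ℝ) * μ f|
          ≤ 2 * p j + (m : ℝ) * δ j := by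
      intro j m hm
      have hLj : (j + 1) * (T j + p j + p (j + 1) + 1) * p j = T (j + 1) - T j := by
        rw [hTsucc j]; omega
      have h1 : ∑ i ∈ Finset.range m, f (seq (T j + i))
          = ∑ i ∈ Finset.range m, f ((pat j).getD (i % p j) d) := by
        refine Finset.sum_congr rfl fun i hi => ?_
        rw [hseq j i (by rw [← hLj]; exact lt_of_lt_of_le (Finset.mem_range.mp hi) hm)]
      rw [h1, aux_sum_mod (fun i => f ((pat j).getD i d)) (p j) (hppos j) m]
      have hpg : ∑ i ∈ Finset.range (p j), f ((pat j).getD i d) = ((pat j).map f).sum :=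
        aux_sum_range_getD (pat j) d f
      rw [hpg]
      set q := m / p j with hq
      set r := m % p j with hr
      have hqr : q * p j + r = m := Nat.div_add_mod' m (p j)
      have hrp : r < p j := Nat.mod_lt _ (hppos j)
      have hqpm : q * p j ≤ m := by omega
      -- remainder sum bound
      have hrem : |(∑ i ∈ Finset.range r, f ((pat j).getD i d)) - (r : ℝ) * μ f|
          ≤ 2 * (p j : ℝ) := by
        have h2 : |∑ i ∈ Finset.range r, f ((pat j).getD i d)| ≤ (r : ℝ) := by
          calc |∑ i ∈ Finset.range r, f ((pat j).getD i d)|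
              ≤ ∑ i ∈ Finset.range r, |f ((pat j).getD i d)| :=
                Finset.abs_sum_le_sum_abs _ _
          _ ≤ ∑ i ∈ Finset.range r, (1:ℝ) := Finset.sum_le_sum fun i _ => hf1 _
          _ = (r : ℝ) := by simp
        have h3 : |(r:ℝ) * μ f| ≤ (r : ℝ) := by
          rw [abs_mul, abs_of_nonneg (by positivity : (0:ℝ) ≤ (r:ℝ))]
          calc (r:ℝ) * |μ f| ≤ (r:ℝ) * 1 :=
                mul_le_mul_of_nonneg_left hmf (by positivity)
          _ = (r : ℝ) := mul_one _
        have hrle : (r : ℝ) ≤ (p j : ℝ) := by exact_mod_cast hrp.le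
        calc |(∑ i ∈ Finset.range r, f ((pat j).getD i d)) - (r : ℝ) * μ f|
            ≤ |∑ i ∈ Finset.range r, f ((pat j).getD i d)| + |(r:ℝ) * μ f| :=
              abs_sub _ _
        _ ≤ (r : ℝ) + (r : ℝ) := add_le_add h2 h3
        _ ≤ 2 * (p j : ℝ) := by linarith
      -- full pattern repetitions bound
      have hqbd : |(q : ℝ) * ((pat j).map f).sum - ((q * p j : ℕ) : ℝ) * μ f|
          ≤ (m : ℝ) * (2 / ((j:ℝ) + 1)) + (m : ℝ) * η j := by
        have h4 : (q : ℝ) * ((pat j).map f).sum - ((q * p j : ℕ) : ℝ) * μ f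
            = (q : ℝ) * (((pat j).map f).sum - (p j : ℝ) * μ f) := by
          push_cast
          ring
        rw [h4, abs_mul, abs_of_nonneg (by positivity : (0:ℝ) ≤ (q:ℝ))]
        have h5 : (q:ℝ) * |((pat j).map f).sum - (p j : ℝ) * μ f|
            ≤ (q:ℝ) * (2 * (s j).card + (p j : ℝ) * η j) :=
          mul_le_mul_of_nonneg_left (E1 j) (by positivity)
        have h6 : (q:ℝ) * ((s j).card : ℝ) * ((j:ℝ) + 1) ≤ (m : ℝ) := by
          have hnat : q * (s j).card * (j + 1) ≤ m := by
            have : q * (s j).card * (j + 1) = q * n j := by rw [hn]; ring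
            rw [this]
            calc q * n j ≤ q * p j := Nat.mul_le_mul_left q (hnpnat j)
            _ ≤ m := hqpm
          exact_mod_cast hnat
        have h7 : (q:ℝ) * ((s j).card : ℝ) ≤ (m : ℝ) / ((j:ℝ) + 1) := by
          rw [le_div_iff₀ (by positivity : (0:ℝ) < (j:ℝ) + 1)]
          exact h6
        have h8 : (q:ℝ) * ((p j : ℝ) * η j) ≤ (m:ℝ) * η j := by
          have : (q:ℝ) * (p j : ℝ) ≤ (m : ℝ) := by exact_mod_cast hqpm
          calc (q:ℝ) * ((p j : ℝ) * η j) = ((q:ℝ) * (p j:ℝ)) * η j := by ring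
          _ ≤ (m:ℝ) * η j := mul_le_mul_of_nonneg_right this (hη0 j)
        calc (q:ℝ) * |((pat j).map f).sum - (p j : ℝ) * μ f|
            ≤ (q:ℝ) * (2 * (s j).card + (p j : ℝ) * η j) := h5
        _ = 2 * ((q:ℝ) * ((s j).card : ℝ)) + (q:ℝ) * ((p j : ℝ) * η j) := by ring
        _ ≤ 2 * ((m:ℝ) / ((j:ℝ) + 1)) + (m:ℝ) * η j := by
              have := mul_le_mul_of_nonneg_left h7 (by norm_num : (0:ℝ) ≤ 2)
              linarith [h8]
        _ = (m : ℝ) * (2 / ((j:ℝ) + 1)) + (m : ℝ) * η j := by ring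
      -- combine
      have hmsplit : (m : ℝ) * μ f = ((q * p j : ℕ) : ℝ) * μ f + (r : ℝ) * μ f := by
        have h9 : ((q * p j : ℕ) : ℝ) + (r : ℝ) = (m : ℝ) := by
          exact_mod_cast congrArg (Nat.cast : ℕ → ℝ) hqr
        rw [← h9]
        ring
      rw [nsmul_eq_mul]
      calc |(q : ℝ) * ((pat j).map f).sum
              + (∑ i ∈ Finset.range r, f ((pat j).getD i d)) - (m : ℝ) * μ f|
          = |((q : ℝ) * ((pat j).map f).sum - ((q * p j : ℕ) : ℝ) * μ f)
              + ((∑ i ∈ Finset.range r, f ((pat j).getD i d)) - (r : ℝ) * μ f)| := by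
            rw [hmsplit]; ring_nf
      _ ≤ |(q : ℝ) * ((pat j).map f).sum - ((q * p j : ℕ) : ℝ) * μ f|
            + |(∑ i ∈ Finset.range r, f ((pat j).getD i d)) - (r : ℝ) * μ f| := abs_add_le _ _
      _ ≤ ((m : ℝ) * (2 / ((j:ℝ) + 1)) + (m : ℝ) * η j) + 2 * (p j : ℝ) :=
            add_le_add hqbd hrem
      _ = 2 * p j + (m : ℝ) * δ j := by rw [hδdef]; ring
    -- trivial prefix bound
    have htriv : ∀ K : ℕ, |(∑ k ∈ Finset.range K, f (seq k)) - (K : ℝ) * μ f| ≤ 2 * K := by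
      intro K
      have h2 : |∑ k ∈ Finset.range K, f (seq k)| ≤ (K : ℝ) := by
        calc |∑ k ∈ Finset.range K, f (seq k)| ≤ ∑ k ∈ Finset.range K, |f (seq k)| :=
              Finset.abs_sum_le_sum_abs _ _
        _ ≤ ∑ k ∈ Finset.range K, (1:ℝ) := Finset.sum_le_sum fun k _ => hf1 _
        _ = (K : ℝ) := by simp
      have h3 : |(K:ℝ) * μ f| ≤ (K : ℝ) := by
        rw [abs_mul, abs_of_nonneg (by positivity : (0:ℝ) ≤ (K:ℝ))]
        calc (K:ℝ) * |μ f| ≤ (K:ℝ) * 1 := mul_le_mul_of_nonneg_left hmf (by positivity)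
        _ = (K : ℝ) := mul_one _
      calc |(∑ k ∈ Finset.range K, f (seq k)) - (K : ℝ) * μ f|
          ≤ |∑ k ∈ Finset.range K, f (seq k)| + |(K:ℝ) * μ f| := abs_sub _ _
      _ ≤ 2 * K := by linarith
    -- main estimate for N in block j+1
    have hmain : ∀ j N, T (j + 1) ≤ N → N ≤ T (j + 2) →
        |(N : ℝ)⁻¹ * (∑ k ∈ Finset.range N, f (seq k)) - μ f|
          ≤ 6 / ((j : ℝ) + 1) + η j + η (j + 1) := by
      intro j N h1 h2
      set m := N - T (j + 1) with hmdef
      set Lj := (j + 1) * (T j + p j + p (j + 1) + 1) * p j with hLjdef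
      have hNsplit : N = T (j + 1) + m := by omega
      have hTj1 : T (j + 1) = T j + Lj := hTsucc j
      have hmle : m ≤ ((j + 1) + 1) * (T (j + 1) + p (j + 1) + p ((j + 1) + 1) + 1) * p (j + 1) := by
        have h3 : T (j + 2) = T (j + 1)
            + ((j + 1) + 1) * (T (j + 1) + p (j + 1) + p ((j + 1) + 1) + 1) * p (j + 1) :=
          hTsucc (j + 1)
        omega
      have hS : ∑ k ∈ Finset.range N, f (seq k)
          = (∑ k ∈ Finset.range (T j), f (seq k))
            + (∑ i ∈ Finset.range Lj, f (seq (T j + i)))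
            + (∑ i ∈ Finset.range m, f (seq (T (j + 1) + i))) := by
        conv_lhs => rw [hNsplit]
        rw [Finset.sum_range_add]
        congr 1
        rw [hTj1, Finset.sum_range_add]
      have b0 := htriv (T j)
      have b1 : |(∑ i ∈ Finset.range Lj, f (seq (T j + i))) - (Lj : ℝ) * μ f|
          ≤ 2 * p j + (Lj : ℝ) * δ j := hblock j Lj le_rfl
      have b2 : |(∑ i ∈ Finset.range m, f (seq (T (j + 1) + i))) - (m : ℝ) * μ f|
          ≤ 2 * p (j + 1) + (m : ℝ) * δ (j + 1) := hblock (j + 1) m hmle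
      have hLjN : (Lj : ℝ) ≤ (N : ℝ) := by
        have h4 : Lj ≤ N := by omega
        exact_mod_cast h4
      have hmN : (m : ℝ) ≤ (N : ℝ) := by
        have h4 : m ≤ N := by omega
        exact_mod_cast h4
      have hDb : |(∑ k ∈ Finset.range N, f (seq k)) - (N : ℝ) * μ f|
          ≤ 2 * (T j : ℝ) + 2 * p j + 2 * p (j + 1) + (N : ℝ) * (δ j + δ (j + 1)) := by
        have hNcast : (N : ℝ) = (T j : ℝ) + (Lj : ℝ) + (m : ℝ) := by
          rw [hNsplit, hTj1]
          push_cast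
          ring
        have habs : |(∑ k ∈ Finset.range N, f (seq k)) - (N : ℝ) * μ f|
            ≤ |(∑ k ∈ Finset.range (T j), f (seq k)) - (T j : ℝ) * μ f|
              + |(∑ i ∈ Finset.range Lj, f (seq (T j + i))) - (Lj : ℝ) * μ f|
              + |(∑ i ∈ Finset.range m, f (seq (T (j + 1) + i))) - (m : ℝ) * μ f| := by
          have heq : (∑ k ∈ Finset.range N, f (seq k)) - (N : ℝ) * μ f
              = ((∑ k ∈ Finset.range (T j), f (seq k)) - (T j : ℝ) * μ f)
                + ((∑ i ∈ Finset.range Lj, f (seq (T j + i))) - (Lj : ℝ) * μ f)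
                + ((∑ i ∈ Finset.range m, f (seq (T (j + 1) + i))) - (m : ℝ) * μ f) := by
            rw [hS, hNcast]
            ring
          rw [heq]
          exact (abs_add_le _ _).trans (add_le_add_left (abs_add_le _ _) _)
        have h5 : (Lj : ℝ) * δ j ≤ (N : ℝ) * δ j :=
          mul_le_mul_of_nonneg_right hLjN (hδ0 j)
        have h6 : (m : ℝ) * δ (j + 1) ≤ (N : ℝ) * δ (j + 1) :=
          mul_le_mul_of_nonneg_right hmN (hδ0 (j + 1))
        have h7 := b0
        have h8 := b1
        have h9 := b2
        linarith [h5, h6, h7, h8, h9, habs]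
      have hNpos : 0 < N := by
        have h4 : T 0 < T (j + 1) := hTmono (by omega)
        omega
      have hNposR : (0:ℝ) < (N : ℝ) := by exact_mod_cast hNpos
      have hCN : 2 * (T j : ℝ) + 2 * p j + 2 * p (j + 1) ≤ (2 / ((j : ℝ) + 1)) * N := by
        have hnat : (j + 1) * (T j + p j + p (j + 1)) ≤ N := by
          have hp1 : 1 ≤ p j := hppos j
          have h4 : (j + 1) * (T j + p j + p (j + 1)) ≤ Lj := by
            calc (j + 1) * (T j + p j + p (j + 1))
                ≤ (j + 1) * (T j + p j + p (j + 1) + 1) := Nat.mul_le_mul_left _ (by omega)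
            _ = (j + 1) * (T j + p j + p (j + 1) + 1) * 1 := (mul_one _).symm
            _ ≤ Lj := by rw [hLjdef]; exact Nat.mul_le_mul le_rfl hp1
          omega
        have h5 : ((j : ℝ) + 1) * ((T j : ℝ) + p j + p (j + 1)) ≤ (N : ℝ) := by
          exact_mod_cast hnat
        rw [div_mul_eq_mul_div, le_div_iff₀ (by positivity : (0:ℝ) < (j : ℝ) + 1)]
        have h6 := mul_le_mul_of_nonneg_left h5 (by norm_num : (0:ℝ) ≤ 2)
        linarith [h6]
      have key : |(N : ℝ)⁻¹ * (∑ k ∈ Finset.range N, f (seq k)) - μ f|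
          = (N : ℝ)⁻¹ * |(∑ k ∈ Finset.range N, f (seq k)) - (N : ℝ) * μ f| := by
        have heq : (N : ℝ)⁻¹ * (∑ k ∈ Finset.range N, f (seq k)) - μ f
            = (N : ℝ)⁻¹ * ((∑ k ∈ Finset.range N, f (seq k)) - (N : ℝ) * μ f) := by
          field_simp
        rw [heq, abs_mul, abs_of_pos (inv_pos.mpr hNposR)]
      rw [key]
      have h10 : (N : ℝ)⁻¹ * |(∑ k ∈ Finset.range N, f (seq k)) - (N : ℝ) * μ f|
          ≤ (N : ℝ)⁻¹ * ((2 / ((j : ℝ) + 1)) * N + (N : ℝ) * (δ j + δ (j + 1))) := by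
        exact mul_le_mul_of_nonneg_left
          (le_trans hDb (add_le_add_left hCN _)) (inv_nonneg.mpr hNposR.le)
      have h11 : (N : ℝ)⁻¹ * ((2 / ((j : ℝ) + 1)) * N + (N : ℝ) * (δ j + δ (j + 1)))
          = 2 / ((j : ℝ) + 1) + (δ j + δ (j + 1)) := by
        field_simp
      rw [h11] at h10
      have h12 : δ j = 2 / ((j : ℝ) + 1) + η j := rfl
      have h13 : δ (j + 1) = 2 / (((j : ℕ) + 1 : ℕ) + 1 : ℝ) + η (j + 1) := rfl
      have h14 : 2 / (((j : ℕ) + 1 : ℕ) + 1 : ℝ) ≤ 2 / ((j : ℝ) + 1) := by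
        apply div_le_div_of_nonneg_left (by norm_num) (by positivity)
        push_cast
        linarith
      calc (N : ℝ)⁻¹ * |(∑ k ∈ Finset.range N, f (seq k)) - (N : ℝ) * μ f|
          ≤ 2 / ((j : ℝ) + 1) + (δ j + δ (j + 1)) := h10
      _ ≤ 6 / ((j : ℝ) + 1) + η j + η (j + 1) := by
          rw [h12, h13]
          have h15 : 2 / ((j : ℝ) + 1) + 2 / ((j : ℝ) + 1) + 2 / ((j : ℝ) + 1)
              = 6 / ((j : ℝ) + 1) := by ring
          linarith [h14]
    -- conclude
    rw [Metric.tendsto_atTop]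
    intro ε hε
    have hb : Tendsto (fun j : ℕ => 6 / ((j : ℝ) + 1) + η j + η (j + 1)) atTop (nhds 0) := by
      have h1 : Tendsto (fun j : ℕ => ((j : ℝ) + 1)) atTop atTop :=
        tendsto_atTop_add_const_right _ 1 tendsto_natCast_atTop_atTop
      have h2 : Tendsto (fun j : ℕ => 6 / ((j : ℝ) + 1)) atTop (nhds 0) :=
        Tendsto.div_atTop tendsto_const_nhds h1
      have h3 : Tendsto (fun j : ℕ => η (j + 1)) atTop (nhds 0) :=
        hηtend.comp (tendsto_add_atTop_nat 1)
      simpa using (h2.add hηtend).add h3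
    obtain ⟨Jb, hJb⟩ := (Metric.tendsto_atTop.mp hb) ε hε
    refine ⟨T (Jb + 1), fun N hN => ?_⟩
    have hjge : Jb + 1 ≤ J N := by
      have h4 := hJ2 N
      have h5 : T (Jb + 1) < T (J N + 1) := by omega
      have h6 : Jb + 1 < J N + 1 := hTmono.lt_iff_lt.mp h5
      omega
    obtain ⟨j', hj'⟩ : ∃ j', J N = j' + 1 := ⟨J N - 1, by omega⟩
    have hj'ge : Jb ≤ j' := by omega
    have hNlb : T (j' + 1) ≤ N := by rw [← hj']; exact hJ1 N
    have hNub : N ≤ T (j' + 2) := by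
      have h4 := hJ2 N
      rw [hj'] at h4
      exact h4.le
    have hm := hmain j' N hNlb hNub
    rw [Real.dist_eq]
    have hb2 := hJb j' hj'ge
    rw [Real.dist_eq, sub_zero] at hb2
    exact lt_of_le_of_lt hm (lt_of_le_of_lt (le_abs_self _) hb2)
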